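/- Let C ⊆ ℝ^d be a closed convex set with 0 in its interior. Then the Gauge distance S_C(w) := inf_{x ∈ C} γ_C(w - x) satisfies S_C(w) = max(0, γ_C(w) - 1) for all w ∈ ℝ^d. -/

import Mathlib

open scoped RealInnerProductSpace

/-- The Gauge distance `S_C(w) = inf_{x ∈ C} γ_C(w - x)` equals `max 0 (γ_C(w) - 1)`. -/
theorem gauge_dist_eq {d : ℕ} (C : Set (EuclideanSpace ℝ (Fin d)))
    (hconv : Convex ℝ C) (hclosed : IsClosed C)
    (h0 : (0 : EuclideanSpace ℝ (Fin d)) ∈ interior C)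
    (w : EuclideanSpace ℝ (Fin d)) :
    sInf ((fun x => gauge C (w - x)) '' C) = max 0 (gauge C w - 1) := by
  have hnhds : C ∈ nhds (0 : EuclideanSpace ℝ (Fin d)) := mem_interior_iff_mem_nhds.mp h0
  have habs : Absorbent ℝ C := absorbent_nhds_zero hnhds
  have hmem : ∀ y, gauge C y ≤ 1 → y ∈ C := fun y hy => by
    have := (gauge_le_one_iff_mem_closure hconv hnhds).mp hy
    rwa [hclosed.closure_eq] at this
  rcases le_or_gt (gauge C w) 1 with hw | hw
  · have hwC : w ∈ C := hmem w hw
    rw [max_eq_left (by linarith)]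
    apply le_antisymm
    · apply csInf_le ⟨0, fun a ha => by
        obtain ⟨x, _, rfl⟩ := ha; exact gauge_nonneg _⟩
      exact ⟨w, hwC, by simp⟩
    · apply le_csInf ⟨_, Set.mem_image_of_mem _ hwC⟩
      rintro a ⟨x, _, rfl⟩; exact gauge_nonneg _
  · rw [max_eq_right (by linarith)]
    have hg0 : (0:ℝ) < gauge C w := by linarith
    apply le_antisymm
    · -- the point x = (1/gauge C w) • w is in C
      set g := gauge C w with hg
      have hx : gauge C ((g⁻¹) • w) ≤ 1 := by
        rw [gauge_smul_of_nonneg (inv_nonneg.2 hg0.le), smul_eq_mul,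
          inv_mul_cancel₀ hg0.ne']
      have hxC := hmem _ hx
      have : gauge C (w - g⁻¹ • w) = g - 1 := by
        have : w - g⁻¹ • w = (1 - g⁻¹) • w := by
          rw [sub_smul, one_smul]
        rw [this, gauge_smul_of_nonneg (by
          rw [sub_nonneg]; exact inv_le_one_of_one_le₀ hw.le), smul_eq_mul]
        field_simp
        exact hg.symm
      calc sInf ((fun x => gauge C (w - x)) '' C) ≤ gauge C (w - g⁻¹ • w) :=
            csInf_le ⟨0, fun a ha => by obtain ⟨x, _, rfl⟩ := ha; exact gauge_nonneg _⟩
              ⟨_, hxC, rfl⟩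
        _ = g - 1 := this
    · apply le_csInf ⟨_, Set.mem_image_of_mem _ (hmem 0 (by simp [gauge_zero]))⟩
      rintro a ⟨x, hx, rfl⟩
      have h1 : gauge C w ≤ gauge C (w - x) + gauge C x := by
        have := gauge_add_le hconv habs (w - x) x
        simpa using this
      have h2 : gauge C x ≤ 1 := gauge_le_one_of_mem hx
      linarith
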